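/- Define V : ℝⁿ × ℝⁿ × ℝⁿ → ℝ by 2V(X,Y,Z) = (1/4)⟨BX, BX⟩ + (3/2)⟨BY, Y⟩ + ⟨Z, Z⟩ + ⟨Z + AY + (1/2)BX, Z + AY + (1/2)BX⟩, where A and B are real symmetric n×n matrices whose eigenvalues lie in [δ_a, Δ_a] and [δ_b, Δ_b] respectively, with 0 < δ_a and 0 < δ_b. Then there exist positive constants δ₂ and δ₃ such that δ₂(‖X‖² + ‖Y‖² + ‖Z‖²) ≤ 2V(X,Y,Z) ≤ δ₃(‖X‖² + ‖Y‖² + ‖Z‖²) for all X, Y, Z ∈ ℝⁿ. -/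

import Mathlib

open scoped RealInnerProductSpace

lemma repr_lin (n : ℕ) (A : Matrix (Fin n) (Fin n) ℝ) (hA : A.IsHermitian)
    (x : EuclideanSpace ℝ (Fin n)) (i : Fin n) :
    hA.eigenvectorBasis.repr (Matrix.toEuclideanLin A x) i =
      hA.eigenvalues i * hA.eigenvectorBasis.repr x i := by
  rw [OrthonormalBasis.repr_apply_apply, OrthonormalBasis.repr_apply_apply]
  have hsym := (Matrix.isHermitian_iff_isSymmetric.1 hA)
  have he : Matrix.toEuclideanLin A (hA.eigenvectorBasis i)
      = hA.eigenvalues i • hA.eigenvectorBasis i := by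
    have h := hA.mulVec_eigenvectorBasis i
    rw [Matrix.toEuclideanLin_apply]
    ext j
    simpa using congrFun h j
  rw [← hsym (hA.eigenvectorBasis i) x, he, inner_smul_left]
  simp

lemma inner_sum_repr (n : ℕ) (A : Matrix (Fin n) (Fin n) ℝ) (hA : A.IsHermitian)
    (x : EuclideanSpace ℝ (Fin n)) :
    ⟪Matrix.toEuclideanLin A x, x⟫ =
      ∑ i, hA.eigenvalues i * (hA.eigenvectorBasis.repr x i) ^ 2 := by
  rw [← hA.eigenvectorBasis.repr.inner_map_map (Matrix.toEuclideanLin A x) x]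
  rw [PiLp.inner_apply]
  refine Finset.sum_congr rfl fun i _ => ?_
  rw [repr_lin]
  simp [RCLike.inner_apply]
  ring

lemma norm_sq_sum_repr (n : ℕ) (A : Matrix (Fin n) (Fin n) ℝ) (hA : A.IsHermitian)
    (x : EuclideanSpace ℝ (Fin n)) :
    ‖Matrix.toEuclideanLin A x‖ ^ 2 =
      ∑ i, (hA.eigenvalues i) ^ 2 * (hA.eigenvectorBasis.repr x i) ^ 2 := by
  rw [← real_inner_self_eq_norm_sq]
  rw [← hA.eigenvectorBasis.repr.inner_map_map]
  rw [PiLp.inner_apply]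
  refine Finset.sum_congr rfl fun i _ => ?_
  rw [repr_lin]
  simp [RCLike.inner_apply]
  rw [mul_pow, sq_abs, sq_abs]

lemma norm_sq_repr (n : ℕ) (A : Matrix (Fin n) (Fin n) ℝ) (hA : A.IsHermitian)
    (x : EuclideanSpace ℝ (Fin n)) :
    ‖x‖ ^ 2 = ∑ i, (hA.eigenvectorBasis.repr x i) ^ 2 := by
  rw [← real_inner_self_eq_norm_sq, ← hA.eigenvectorBasis.repr.inner_map_map,
    PiLp.inner_apply]
  refine Finset.sum_congr rfl fun i _ => ?_
  simp [RCLike.inner_apply]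

section bounds
variable {n : ℕ} {A : Matrix (Fin n) (Fin n) ℝ} (hA : A.IsHermitian) {a b : ℝ}
  (hspec : ∀ μ ∈ spectrum ℝ A, a ≤ μ ∧ μ ≤ b) (ha : 0 < a)
  (x : EuclideanSpace ℝ (Fin n))
include hA hspec ha

lemma quad_lb : a * ‖x‖ ^ 2 ≤ ⟪Matrix.toEuclideanLin A x, x⟫ := by
  rw [inner_sum_repr n A hA, norm_sq_repr n A hA, Finset.mul_sum]
  refine Finset.sum_le_sum fun i _ => ?_
  exact mul_le_mul_of_nonneg_right
    (hspec _ (hA.eigenvalues_mem_spectrum_real i)).1 (sq_nonneg _)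

lemma quad_ub : ⟪Matrix.toEuclideanLin A x, x⟫ ≤ max b 0 * ‖x‖ ^ 2 := by
  rw [inner_sum_repr n A hA, norm_sq_repr n A hA, Finset.mul_sum]
  refine Finset.sum_le_sum fun i _ => ?_
  exact mul_le_mul_of_nonneg_right
    (le_max_iff.2 (Or.inl (hspec _ (hA.eigenvalues_mem_spectrum_real i)).2))
    (sq_nonneg _)

lemma nsq_lb : a ^ 2 * ‖x‖ ^ 2 ≤ ‖Matrix.toEuclideanLin A x‖ ^ 2 := by
  rw [norm_sq_sum_repr n A hA, norm_sq_repr n A hA, Finset.mul_sum]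
  refine Finset.sum_le_sum fun i _ => ?_
  have h := hspec _ (hA.eigenvalues_mem_spectrum_real i)
  exact mul_le_mul_of_nonneg_right (by nlinarith [h.1, h.2]) (sq_nonneg _)

lemma nsq_ub : ‖Matrix.toEuclideanLin A x‖ ^ 2 ≤ (max b 0) ^ 2 * ‖x‖ ^ 2 := by
  rw [norm_sq_sum_repr n A hA, norm_sq_repr n A hA, Finset.mul_sum]
  refine Finset.sum_le_sum fun i _ => ?_
  have h := hspec _ (hA.eigenvalues_mem_spectrum_real i)
  have hm : b ≤ max b 0 := le_max_left _ _
  exact mul_le_mul_of_nonneg_right (by nlinarith [h.1, h.2]) (sq_nonneg _)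

end bounds

set_option maxHeartbeats 1000000 in
theorem stmt_7 (n : ℕ) (A B : Matrix (Fin n) (Fin n) ℝ)
    (hA : A.IsHermitian) (hB : B.IsHermitian)
    (δ_a Δ_a δ_b Δ_b : ℝ) (hδa : 0 < δ_a) (hδb : 0 < δ_b)
    (hAspec : ∀ μ ∈ spectrum ℝ A, δ_a ≤ μ ∧ μ ≤ Δ_a)
    (hBspec : ∀ μ ∈ spectrum ℝ B, δ_b ≤ μ ∧ μ ≤ Δ_b) :
    ∃ δ₂ δ₃ : ℝ, 0 < δ₂ ∧ 0 < δ₃ ∧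
      ∀ X Y Z : EuclideanSpace ℝ (Fin n),
        δ₂ * (‖X‖ ^ 2 + ‖Y‖ ^ 2 + ‖Z‖ ^ 2) ≤
            (1/4) * ⟪Matrix.toEuclideanLin B X, Matrix.toEuclideanLin B X⟫ +
              (3/2) * ⟪Matrix.toEuclideanLin B Y, Y⟫ + ⟪Z, Z⟫ +
              ⟪Z + Matrix.toEuclideanLin A Y + (1/2 : ℝ) • Matrix.toEuclideanLin B X,
                Z + Matrix.toEuclideanLin A Y + (1/2 : ℝ) • Matrix.toEuclideanLin B X⟫ ∧
          (1/4) * ⟪Matrix.toEuclideanLin B X, Matrix.toEuclideanLin B X⟫ +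
              (3/2) * ⟪Matrix.toEuclideanLin B Y, Y⟫ + ⟪Z, Z⟫ +
              ⟪Z + Matrix.toEuclideanLin A Y + (1/2 : ℝ) • Matrix.toEuclideanLin B X,
                Z + Matrix.toEuclideanLin A Y + (1/2 : ℝ) • Matrix.toEuclideanLin B X⟫ ≤
            δ₃ * (‖X‖ ^ 2 + ‖Y‖ ^ 2 + ‖Z‖ ^ 2) := by
  set MA := max Δ_a 0 with hMAdef
  set MB := max Δ_b 0 with hMBdef
  have hMA : 0 ≤ MA := le_max_right _ _
  have hMB : 0 ≤ MB := le_max_right _ _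
  refine ⟨min (δ_b^2/4) (min ((3/2)*δ_b) 1), MB^2 + (3/2)*MB + 3*MA^2 + 4,
    lt_min (by positivity) (lt_min (by positivity) one_pos), by positivity, ?_⟩
  intro X Y Z
  have hm1 : min (δ_b^2/4) (min ((3/2)*δ_b) 1) ≤ δ_b^2/4 := min_le_left _ _
  have hm2 : min (δ_b^2/4) (min ((3/2)*δ_b) 1) ≤ (3/2)*δ_b :=
    le_trans (min_le_right _ _) (min_le_left _ _)
  have hm3 : min (δ_b^2/4) (min ((3/2)*δ_b) 1) ≤ 1 :=
    le_trans (min_le_right _ _) (min_le_right _ _)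
  set W := Z + Matrix.toEuclideanLin A Y + (1/2 : ℝ) • Matrix.toEuclideanLin B X with hWdef
  have e1 : ⟪Matrix.toEuclideanLin B X, Matrix.toEuclideanLin B X⟫
      = ‖Matrix.toEuclideanLin B X‖^2 := real_inner_self_eq_norm_sq _
  have e2 : ⟪Z, Z⟫ = ‖Z‖^2 := real_inner_self_eq_norm_sq _
  have e3 : ⟪W, W⟫ = ‖W‖^2 := real_inner_self_eq_norm_sq _
  have hBX1 := nsq_lb hB hBspec hδb X
  have hBX2 := nsq_ub hB hBspec hδb X
  have hBY1 := quad_lb hB hBspec hδb Y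
  have hBY2 := quad_ub hB hBspec hδb Y
  have hAY2 := nsq_ub hA hAspec hδa Y
  have hWle : ‖W‖ ≤ ‖Z‖ + ‖Matrix.toEuclideanLin A Y‖ + (1/2)*‖Matrix.toEuclideanLin B X‖ := by
    calc ‖W‖ ≤ ‖Z‖ + ‖Matrix.toEuclideanLin A Y‖ + ‖(1/2 : ℝ) • Matrix.toEuclideanLin B X‖ :=
          norm_add₃_le
      _ = ‖Z‖ + ‖Matrix.toEuclideanLin A Y‖ + (1/2)*‖Matrix.toEuclideanLin B X‖ := by
          rw [norm_smul]; norm_num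
  have hW2 : ‖W‖^2 ≤ 3*‖Z‖^2 + 3*‖Matrix.toEuclideanLin A Y‖^2
      + (3/4)*‖Matrix.toEuclideanLin B X‖^2 := by
    nlinarith [norm_nonneg W, norm_nonneg Z, norm_nonneg (Matrix.toEuclideanLin A Y),
      norm_nonneg (Matrix.toEuclideanLin B X),
      sq_nonneg (‖Z‖ - ‖Matrix.toEuclideanLin A Y‖),
      sq_nonneg (‖Z‖ - (1/2)*‖Matrix.toEuclideanLin B X‖),
      sq_nonneg (‖Matrix.toEuclideanLin A Y‖ - (1/2)*‖Matrix.toEuclideanLin B X‖)]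
  rw [e1, e2, e3]
  have p1 : min (δ_b^2/4) (min ((3/2)*δ_b) 1) * ‖X‖^2 ≤ δ_b^2/4 * ‖X‖^2 :=
    mul_le_mul_of_nonneg_right hm1 (sq_nonneg _)
  have p2 : min (δ_b^2/4) (min ((3/2)*δ_b) 1) * ‖Y‖^2 ≤ (3/2)*δ_b * ‖Y‖^2 :=
    mul_le_mul_of_nonneg_right hm2 (sq_nonneg _)
  have p3 : min (δ_b^2/4) (min ((3/2)*δ_b) 1) * ‖Z‖^2 ≤ 1 * ‖Z‖^2 :=
    mul_le_mul_of_nonneg_right hm3 (sq_nonneg _)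
  have q1 : MB^2 * ‖X‖^2 ≤ (MB^2 + (3/2)*MB + 3*MA^2 + 4) * ‖X‖^2 :=
    mul_le_mul_of_nonneg_right (by nlinarith) (sq_nonneg _)
  have q2 : ((3/2)*MB + 3*MA^2) * ‖Y‖^2 ≤ (MB^2 + (3/2)*MB + 3*MA^2 + 4) * ‖Y‖^2 :=
    mul_le_mul_of_nonneg_right (by nlinarith) (sq_nonneg _)
  have q3 : (4:ℝ) * ‖Z‖^2 ≤ (MB^2 + (3/2)*MB + 3*MA^2 + 4) * ‖Z‖^2 :=
    mul_le_mul_of_nonneg_right (by nlinarith) (sq_nonneg _)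
  constructor
  · linarith [hBX1, hBY1, sq_nonneg ‖W‖]
  · linarith [hBX2, hBY2, hAY2, hW2]
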